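/- Let λ_n be as above and ψ(x) = x - 1/x for x > 0. For all real s with 0 < s ≤ 1 and all n ≥ 2, |ψ^{∘n}(a_n(s)) - ψ^{∘n}(b_n(s))| ≤ max(λ_2^{s-1}, 1) · s(n+1)/(λ_n λ_{n-1}^2) · (λ_n^2 - λ_{n-1}^2), where a_n(s) = λ_n (λ_n/λ_{n-1})^s and b_n(s) = λ_n (λ_{n+1}/λ_n)^s. In particular ψ^{∘n}(a_n(s)) - ψ^{∘n}(b_n(s)) → 0 as n → ∞. -/

import Mathlib

noncomputable def lam : ℕ → ℝ
  | 0 => 0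
  | n + 1 => (lam n + Real.sqrt (lam n ^ 2 + 4)) / 2

noncomputable def psiR (x : ℝ) : ℝ := x - 1 / x

lemma lam_nonneg : ∀ n, 0 ≤ lam n
  | 0 => le_refl 0
  | n + 1 => by
      have := lam_nonneg n
      have h := Real.sqrt_nonneg (lam n ^ 2 + 4)
      simp only [lam]; linarith

lemma one_le_lam_succ (n : ℕ) : 1 ≤ lam (n + 1) := by
  have h0 := lam_nonneg n
  have h4 : (2:ℝ) = Real.sqrt 4 := by
    rw [show (4:ℝ) = 2^2 by norm_num, Real.sqrt_sq]; norm_num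
  have h : Real.sqrt 4 ≤ Real.sqrt (lam n ^ 2 + 4) := by
    apply Real.sqrt_le_sqrt; nlinarith
  simp only [lam]; linarith [h4 ▸ h]

lemma lam_succ_pos (n : ℕ) : 0 < lam (n + 1) := lt_of_lt_of_le one_pos (one_le_lam_succ n)

lemma lam_sq (n : ℕ) : lam (n + 1) ^ 2 = lam n * lam (n + 1) + 1 := by
  have h0 := lam_nonneg n
  have hr : Real.sqrt (lam n ^ 2 + 4) ^ 2 = lam n ^ 2 + 4 := Real.sq_sqrt (by nlinarith)
  simp only [lam]; nlinarith [hr]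

lemma lam_lt_succ (n : ℕ) : lam n < lam (n + 1) := by
  have h := lam_sq n
  have hp := lam_succ_pos n
  nlinarith

lemma lam_sq_ge : ∀ n : ℕ, (n : ℝ) ≤ lam n ^ 2
  | 0 => by simp [lam]
  | n + 1 => by
      have ih := lam_sq_ge n
      have h := lam_sq n
      have h2 := (lam_lt_succ n).le
      have h0 := lam_nonneg n
      push_cast
      nlinarith

lemma psi_lam (n : ℕ) : psiR (lam (n + 1)) = lam n := by
  have h := lam_sq n
  have hp := lam_succ_pos n
  unfold psiR
  field_simp
  nlinarith

lemma psi_mono {x y : ℝ} (hx : 0 < x) (hxy : x ≤ y) : psiR x ≤ psiR y := by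
  unfold psiR
  have hy : 0 < y := lt_of_lt_of_le hx hxy
  have : 1 / y ≤ 1 / x := by apply one_div_le_one_div_of_le hx hxy
  linarith

lemma one_le_lam {n : ℕ} (h : 1 ≤ n) : 1 ≤ lam n := by
  obtain ⟨m, rfl⟩ : ∃ m, n = m + 1 := ⟨n - 1, by omega⟩
  exact one_le_lam_succ m

lemma iter_bound : ∀ n : ℕ, ∀ x y : ℝ, lam n ≤ y → y ≤ x →
    psiR^[n] y ≤ psiR^[n] x ∧ psiR^[n] x - psiR^[n] y ≤ ((n : ℝ) + 1) * (x - y) := by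
  intro n
  induction n with
  | zero => intro x y _ hxy; simp; linarith
  | succ n ih =>
    intro x y hy hxy
    have hy1 : (1:ℝ) ≤ y := le_trans (one_le_lam_succ n) hy
    have hx1 : (1:ℝ) ≤ x := le_trans hy1 hxy
    have hy0 : (0:ℝ) < y := by linarith
    have hx0 : (0:ℝ) < x := by linarith
    have hm : psiR y ≤ psiR x := psi_mono hy0 hxy
    have hlb : lam n ≤ psiR y := by
      rw [← psi_lam n]; exact psi_mono (lam_succ_pos n) hy
    have hxy1 : ((n : ℝ) + 1) ≤ x * y := by
      have h1 := lam_sq_ge (n + 1)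
      have h2 : lam (n+1) ^ 2 ≤ x * y := by nlinarith [lam_nonneg (n+1)]
      push_cast at h1; linarith
    have hdiff : psiR x - psiR y ≤ (1 + 1 / ((n:ℝ) + 1)) * (x - y) := by
      have heq : psiR x - psiR y = (x - y) * (1 + 1 / (x * y)) := by
        unfold psiR; field_simp; ring
      have hn1 : (0:ℝ) < (n:ℝ) + 1 := by positivity
      have hinv : 1 / (x * y) ≤ 1 / ((n:ℝ) + 1) :=
        one_div_le_one_div_of_le hn1 hxy1
      rw [heq]
      have hxy' : 0 ≤ x - y := by linarith
      nlinarith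
    obtain ⟨ih1, ih2⟩ := ih (psiR x) (psiR y) hlb hm
    rw [Function.iterate_succ_apply, Function.iterate_succ_apply]
    refine ⟨ih1, ?_⟩
    have hn1 : (0:ℝ) < (n:ℝ) + 1 := by positivity
    have : ((n:ℝ) + 1) * (psiR x - psiR y) ≤ ((n:ℝ) + 1) * ((1 + 1/((n:ℝ)+1)) * (x - y)) := by
      apply mul_le_mul_of_nonneg_left hdiff (by positivity)
    push_cast
    have hexp : ((n:ℝ) + 1) * ((1 + 1/((n:ℝ)+1)) * (x - y)) = ((n:ℝ) + 1 + 1) * (x - y) := by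
      field_simp
    rw [hexp] at this
    linarith

lemma rpow_diff_le {s u v : ℝ} (hv : 1 ≤ v) (huv : v ≤ u) (hs0 : 0 < s) (hs1 : s ≤ 1) :
    u ^ s - v ^ s ≤ s * (u - v) := by
  have hv0 : (0:ℝ) < v := by linarith
  have hu0 : (0:ℝ) < u := by linarith
  have hdv : (0:ℝ) ≤ u / v := by positivity
  have hber : (1 + (u/v - 1)) ^ s ≤ 1 + s * (u/v - 1) :=
    rpow_one_add_le_one_add_mul_self (by linarith) hs0.le hs1
  have h1 : (u/v) ^ s ≤ 1 + s * (u/v - 1) := by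
    have he : 1 + (u/v - 1) = u/v := by ring
    rwa [he] at hber
  have hu_eq : u ^ s = v ^ s * (u/v) ^ s := by
    rw [← Real.mul_rpow hv0.le hdv]
    congr 1
    field_simp
  have hvs0 : 0 < v ^ s := Real.rpow_pos_of_pos hv0 s
  have h2 : u ^ s - v ^ s ≤ v ^ s * (s * (u/v - 1)) := by
    rw [hu_eq]; nlinarith [h1]
  have h3 : v ^ s * (s * (u/v - 1)) = s * ((v ^ s / v) * (u - v)) := by
    field_simp
  have h4 : v ^ s / v ≤ 1 := by
    rw [← Real.rpow_sub_one hv0.ne' s]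
    exact Real.rpow_le_one_of_one_le_of_nonpos hv (by linarith)
  have h5 : (0:ℝ) ≤ u - v := by linarith
  calc u ^ s - v ^ s ≤ s * ((v ^ s / v) * (u - v)) := by rw [← h3]; exact h2
    _ ≤ s * (1 * (u - v)) :=
        mul_le_mul_of_nonneg_left (mul_le_mul_of_nonneg_right h4 h5) hs0.le
    _ = s * (u - v) := by ring

lemma lam_one : lam 1 = 1 := by
  show (lam 0 + Real.sqrt (lam 0 ^ 2 + 4)) / 2 = 1
  rw [show lam 0 = 0 from rfl]
  rw [show (0:ℝ)^2 + 4 = 2^2 by norm_num, Real.sqrt_sq (by norm_num : (0:ℝ) ≤ 2)]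
  norm_num

set_option maxHeartbeats 1000000 in
lemma main_bound (s : ℝ) (hs0 : 0 < s) (hs1 : s ≤ 1) (m : ℕ) :
    |psiR^[m+2] (lam (m+2) * (lam (m+2) / lam (m+1)) ^ s) -
      psiR^[m+2] (lam (m+2) * (lam (m+3) / lam (m+2)) ^ s)| ≤
      (s * (((m:ℝ)+2) + 1) / (lam (m+2) * lam (m+1) ^ 2)) * (lam (m+2) ^ 2 - lam (m+1) ^ 2) := by
  set p := lam (m+1) with hpdef
  set q := lam (m+2) with hqdef
  set r := lam (m+3) with hrdef
  have hp1 : 1 ≤ p := one_le_lam_succ m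
  have hq1 : 1 ≤ q := one_le_lam_succ (m+1)
  have hr1 : 1 ≤ r := one_le_lam_succ (m+2)
  have hp0 : 0 < p := by linarith
  have hq0 : 0 < q := by linarith
  have hr0 : 0 < r := by linarith
  have hpq : p < q := lam_lt_succ (m+1)
  have hqr : q < r := lam_lt_succ (m+2)
  have e1 : q ^ 2 = p * q + 1 := lam_sq (m+1)
  have e2 : r ^ 2 = q * r + 1 := lam_sq (m+2)
  have hrr : r * (r - q) = 1 := by nlinarith [e2]
  set u := q / p with hudef
  set v := r / q with hvdef
  have hv1 : 1 ≤ v := (one_le_div hq0).2 hqr.le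
  have huv : v ≤ u := by
    rw [hvdef, hudef, div_le_div_iff₀ hq0 hp0]
    nlinarith [mul_nonneg (by linarith : (0:ℝ) ≤ r - p) (by linarith : (0:ℝ) ≤ r - q)]
  have hu1 : 1 ≤ u := le_trans hv1 huv
  set a := q * u ^ s with hadef
  set b := q * v ^ s with hbdef
  have hvs : 1 ≤ v ^ s := Real.one_le_rpow hv1 hs0.le
  have hqb : q ≤ b := by
    rw [hbdef]; nlinarith
  have hba : b ≤ a := by
    apply mul_le_mul_of_nonneg_left _ hq0.le
    exact Real.rpow_le_rpow (by positivity) huv hs0.le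
  obtain ⟨hmono, hlin⟩ := iter_bound (m+2) a b hqb hba
  rw [abs_of_nonneg (by linarith)]
  -- key inequality: q * (u - v) ≤ (q^2 - p^2) / (q * p^2)
  have h7 : p ^ 2 * (r - q) ≤ r := by
    have h7r : (p ^ 2 * (r - q)) * r ≤ r * r := by
      have : (p ^ 2 * (r - q)) * r = p ^ 2 := by
        linear_combination (p^2) * hrr
      rw [this]; nlinarith
    exact le_of_mul_le_mul_right h7r hr0
  have h8 : p ^ 2 - 1 - p ^ 2 * q * (r - q) ≤ 0 := by
    have h8r : (p ^ 2 - 1 - p ^ 2 * q * (r - q)) * r = p ^ 2 * (r - q) - r := by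
      linear_combination (-(p^2*q)) * hrr
    have : (p ^ 2 - 1 - p ^ 2 * q * (r - q)) * r ≤ 0 * r := by
      rw [h8r, zero_mul]; linarith
    exact le_of_mul_le_mul_right this hr0
  have e1' : p * q * (q * q) = p * q * (p * q + 1) := by
    have h : q * q = p * q + 1 := by linear_combination e1
    rw [h]
  have hkey0 : p * q * (q * q - p * r) ≤ q * q - p * p := by nlinarith [e1, e1', h8]
  have hkey : q * (u - v) ≤ (q ^ 2 - p ^ 2) / (q * p ^ 2) := by
    rw [le_div_iff₀ (show (0:ℝ) < q * p ^ 2 by positivity), hudef, hvdef]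
    have expand : q * (q / p - r / q) * (q * p ^ 2) = p * q * (q * q - p * r) := by
      field_simp
    rw [expand]
    nlinarith [hkey0]
  have hdiff : a - b ≤ s * (q * (u - v)) := by
    have h := rpow_diff_le hv1 huv hs0 hs1
    have : q * (u ^ s - v ^ s) ≤ q * (s * (u - v)) := mul_le_mul_of_nonneg_left h hq0.le
    rw [hadef, hbdef]; nlinarith [this]
  have hqp2 : q ^ 2 - p ^ 2 ≥ 0 := by nlinarith
  have final : ((m:ℝ) + 2 + 1) * (a - b) ≤
      (s * (((m:ℝ)+2) + 1) / (q * p ^ 2)) * (q ^ 2 - p ^ 2) := by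
    have hc0 : (0:ℝ) ≤ (m:ℝ) + 2 + 1 := by positivity
    have h1 : a - b ≤ s * ((q ^ 2 - p ^ 2) / (q * p ^ 2)) := by
      have := mul_le_mul_of_nonneg_left hkey hs0.le
      linarith [hdiff]
    have h2 : ((m:ℝ) + 2 + 1) * (a - b) ≤ ((m:ℝ) + 2 + 1) * (s * ((q ^ 2 - p ^ 2) / (q * p ^ 2))) :=
      mul_le_mul_of_nonneg_left h1 hc0
    calc ((m:ℝ) + 2 + 1) * (a - b) ≤ ((m:ℝ) + 2 + 1) * (s * ((q ^ 2 - p ^ 2) / (q * p ^ 2))) := h2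
      _ = (s * (((m:ℝ)+2) + 1) / (q * p ^ 2)) * (q ^ 2 - p ^ 2) := by ring
  have hcast : ((m:ℝ) + 2 + 1) = ((m+2 : ℕ) : ℝ) + 1 := by push_cast; ring
  calc psiR^[m+2] a - psiR^[m+2] b ≤ (((m+2:ℕ) : ℝ) + 1) * (a - b) := hlin
    _ = ((m:ℝ) + 2 + 1) * (a - b) := by rw [hcast]
    _ ≤ _ := final

lemma tendsto_sqrt_nat : Filter.Tendsto (fun n : ℕ => Real.sqrt n) Filter.atTop Filter.atTop := by
  apply Filter.tendsto_atTop_atTop.2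
  intro b
  refine ⟨⌈b^2⌉₊, fun a ha => ?_⟩
  have h1 : (b:ℝ)^2 ≤ (a:ℝ) := le_trans (Nat.le_ceil _) (by exact_mod_cast ha)
  calc b ≤ |b| := le_abs_self b
    _ = Real.sqrt (b^2) := (Real.sqrt_sq_eq_abs b).symm
    _ ≤ Real.sqrt a := Real.sqrt_le_sqrt h1

set_option maxHeartbeats 1000000 in
lemma main_bound2 (s : ℝ) (hs0 : 0 < s) (hs1 : s ≤ 1) (m : ℕ) :
    (s * (((m:ℝ)+2) + 1) / (lam (m+2) * lam (m+1) ^ 2)) * (lam (m+2) ^ 2 - lam (m+1) ^ 2) ≤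
      6 * s / Real.sqrt ((m:ℝ)+2) := by
  set p := lam (m+1) with hpdef
  set q := lam (m+2) with hqdef
  have hp1 : 1 ≤ p := one_le_lam_succ m
  have hq1 : 1 ≤ q := one_le_lam_succ (m+1)
  have hp0 : 0 < p := by linarith
  have hq0 : 0 < q := by linarith
  have hpq : p < q := lam_lt_succ (m+1)
  have e1 : q ^ 2 = p * q + 1 := lam_sq (m+1)
  set S := Real.sqrt ((m:ℝ)+2) with hSdef
  have hS0 : 0 < S := Real.sqrt_pos.2 (by positivity)
  -- q^2 - p^2 ≤ 2
  have hqp : q * (q - p) = 1 := by linear_combination e1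
  have h2le : q ^ 2 - p ^ 2 ≤ 2 := by nlinarith [mul_le_mul_of_nonneg_right hpq.le (by linarith : (0:ℝ) ≤ q - p)]
  have hqp2 : (0:ℝ) ≤ q ^ 2 - p ^ 2 := by nlinarith
  -- S ≤ q
  have hq2 : ((m:ℝ)+2) ≤ q ^ 2 := by
    have := lam_sq_ge (m+2); push_cast at this; linarith
  have hSq : S ≤ q := by
    rw [hSdef]
    calc Real.sqrt ((m:ℝ)+2) ≤ Real.sqrt (q^2) := Real.sqrt_le_sqrt hq2
      _ = q := Real.sqrt_sq hq0.le
  -- (m+1) ≤ p^2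
  have hp2 : ((m:ℝ)+1) ≤ p ^ 2 := by
    have := lam_sq_ge (m+1); push_cast at this; linarith
  have h1 : S * ((m:ℝ)+1) ≤ q * p ^ 2 := by
    apply mul_le_mul hSq hp2 (by positivity) hq0.le
  have step1 : (s * (((m:ℝ)+2) + 1) / (q * p ^ 2)) * (q ^ 2 - p ^ 2) ≤
      (s * (((m:ℝ)+2) + 1) / (q * p ^ 2)) * 2 :=
    mul_le_mul_of_nonneg_left h2le (by positivity)
  have step2 : (s * (((m:ℝ)+2) + 1) / (q * p ^ 2)) * 2 ≤ 6 * s / S := by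
    have heq : (s * (((m:ℝ)+2) + 1) / (q * p ^ 2)) * 2 = (2 * s * ((m:ℝ)+3)) / (q * p ^ 2) := by
      ring
    rw [heq, div_le_div_iff₀ (by positivity) hS0]
    have hm0 : (0:ℝ) ≤ (m:ℝ) := Nat.cast_nonneg m
    nlinarith [mul_le_mul_of_nonneg_left h1 (mul_nonneg (by norm_num : (0:ℝ) ≤ 6) hs0.le),
      mul_nonneg (mul_nonneg hs0.le hS0.le) hm0]
  linarith

theorem stmt_16 (s : ℝ) (hs0 : 0 < s) (hs1 : s ≤ 1) :
    (∀ n : ℕ, 2 ≤ n →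
      |psiR^[n] (lam n * (lam n / lam (n - 1)) ^ s) -
        psiR^[n] (lam n * (lam (n + 1) / lam n) ^ s)| ≤
        max (lam 2 ^ (s - 1)) 1 * (s * (n + 1) / (lam n * lam (n - 1) ^ 2)) *
          (lam n ^ 2 - lam (n - 1) ^ 2)) ∧
    Filter.Tendsto (fun n : ℕ =>
      psiR^[n] (lam n * (lam n / lam (n - 1)) ^ s) -
        psiR^[n] (lam n * (lam (n + 1) / lam n) ^ s)) Filter.atTop (nhds 0) := by
  have hmax1 : (1:ℝ) ≤ max (lam 2 ^ (s - 1)) 1 := le_max_right _ _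
  have key : ∀ n : ℕ, 2 ≤ n →
      |psiR^[n] (lam n * (lam n / lam (n - 1)) ^ s) -
        psiR^[n] (lam n * (lam (n + 1) / lam n) ^ s)| ≤
        (s * ((n:ℝ) + 1) / (lam n * lam (n - 1) ^ 2)) * (lam n ^ 2 - lam (n - 1) ^ 2) := by
    intro n hn
    obtain ⟨m, rfl⟩ : ∃ m, n = m + 2 := ⟨n - 2, by omega⟩
    have hb := main_bound s hs0 hs1 m
    have hsub : m + 2 - 1 = m + 1 := rfl
    rw [hsub]
    have hcast : ((m+2:ℕ):ℝ) + 1 = ((m:ℝ) + 2) + 1 := by push_cast; ring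
    rw [hcast]
    convert hb using 3 <;> norm_num
  have hXnn : ∀ m : ℕ,
      0 ≤ (s * (((m:ℝ)+2) + 1) / (lam (m+2) * lam (m+1) ^ 2)) * (lam (m+2) ^ 2 - lam (m+1) ^ 2) := by
    intro m
    have hp1 := one_le_lam_succ m
    have hq1 := one_le_lam_succ (m+1)
    have hpq := (lam_lt_succ (m+1)).le
    apply mul_nonneg
    · apply div_nonneg (by positivity) (by nlinarith)
    · nlinarith
  constructor
  · intro n hn
    have hk := key n hn
    obtain ⟨m, rfl⟩ : ∃ m, n = m + 2 := ⟨n - 2, by omega⟩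
    have hsub : m + 2 - 1 = m + 1 := rfl
    rw [hsub] at hk ⊢
    have hcast : ((m+2:ℕ):ℝ) + 1 = ((m:ℝ) + 2) + 1 := by push_cast; ring
    rw [hcast] at hk ⊢
    have hX := hXnn m
    nlinarith [mul_nonneg (sub_nonneg.2 hmax1) hX]
  · apply squeeze_zero_norm' (a := fun n : ℕ => 6 * s / Real.sqrt n)
    · rw [Filter.eventually_atTop]
      refine ⟨2, fun n hn => ?_⟩
      rw [Real.norm_eq_abs]
      have hk := key n hn
      obtain ⟨m, rfl⟩ : ∃ m, n = m + 2 := ⟨n - 2, by omega⟩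
      have hsub : m + 2 - 1 = m + 1 := rfl
      rw [hsub] at hk ⊢
      have hcast : ((m+2:ℕ):ℝ) + 1 = ((m:ℝ) + 2) + 1 := by push_cast; ring
      rw [hcast] at hk
      have h2 := main_bound2 s hs0 hs1 m
      have hcast2 : ((m+2:ℕ):ℝ) = (m:ℝ) + 2 := by push_cast; ring
      rw [hcast2]
      linarith
    · have h1 : Filter.Tendsto (fun n : ℕ => (Real.sqrt n)⁻¹) Filter.atTop (nhds 0) :=
        tendsto_sqrt_nat.inv_tendsto_atTop
      have h2 := h1.const_mul (6 * s)
      rw [mul_zero] at h2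
      simpa [div_eq_mul_inv] using h2
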